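/- For every z > 0, (1/z) ∫_0^z e^{−t²/2} dt ≤ min{ (1 + z²/3)^{−1/2}, √(π/(2z²)) }. -/

import Mathlib

open Real MeasureTheory

lemma aux_pos (t : ℝ) : (0:ℝ) < 1 + t ^ 2 / 3 := by positivity

lemma deriv_F (t : ℝ) :
    HasDerivAt (fun t : ℝ => t * (1 + t ^ 2 / 3) ^ (-(1:ℝ) / 2))
      ((1 + t ^ 2 / 3) ^ (-(3:ℝ) / 2)) t := by
  have hg : HasDerivAt (fun t : ℝ => 1 + t ^ 2 / 3) (2 * t / 3) t := by
    have := ((hasDerivAt_pow 2 t).div_const 3).const_add 1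
    simpa using this
  have h1 : HasDerivAt (fun t : ℝ => (1 + t ^ 2 / 3) ^ (-(1:ℝ) / 2))
      (2 * t / 3 * (-(1:ℝ)/2) * (1 + t ^ 2 / 3) ^ (-(1:ℝ)/2 - 1)) t :=
    hg.rpow_const (Or.inl (aux_pos t).ne')
  have h2 := (hasDerivAt_id t).mul h1
  refine h2.congr_deriv ?_
  have ha := aux_pos t
  have e1 : (-(1:ℝ)/2 - 1) = -(3:ℝ)/2 := by norm_num
  rw [e1]
  have e2 : (1 + t ^ 2 / 3) ^ (-(1:ℝ) / 2)
      = (1 + t ^ 2 / 3) ^ (-(3:ℝ) / 2) * (1 + t ^ 2 / 3) := by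
    rw [← Real.rpow_add_one ha.ne']
    norm_num
  rw [e2]; simp only [id_eq]; ring

lemma pointwise (t : ℝ) : Real.exp (-t ^ 2 / 2) ≤ (1 + t ^ 2 / 3) ^ (-(3:ℝ) / 2) := by
  have ha := aux_pos t
  have h1 : (1 + t ^ 2 / 3) ≤ Real.exp (t ^ 2 / 3) := by
    have := Real.add_one_le_exp (t ^ 2 / 3); linarith
  have h2 : (1 + t ^ 2 / 3) ^ ((3:ℝ)/2) ≤ Real.exp (t ^ 2 / 2) := by
    calc (1 + t ^ 2 / 3) ^ ((3:ℝ)/2) ≤ (Real.exp (t ^ 2 / 3)) ^ ((3:ℝ)/2) :=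
          Real.rpow_le_rpow ha.le h1 (by norm_num)
      _ = Real.exp (t ^ 2 / 2) := by
          rw [← Real.exp_mul]; ring_nf
  have h3 : Real.exp (-t ^ 2 / 2) = (Real.exp (t ^ 2 / 2))⁻¹ := by
    rw [← Real.exp_neg]; ring_nf
  rw [h3, show (-(3:ℝ))/2 = -(3/2) by norm_num, Real.rpow_neg ha.le]
  exact inv_anti₀ (by positivity) h2

theorem gaussian_integral_bound (z : ℝ) (hz : 0 < z) :
    (1 / z) * ∫ t in (0:ℝ)..z, Real.exp (-t ^ 2 / 2) ≤
      min ((1 + z ^ 2 / 3) ^ (-(1:ℝ) / 2)) (Real.sqrt (π / (2 * z ^ 2))) := by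
  have hcont : Continuous (fun t : ℝ => (1 + t ^ 2 / 3) ^ (-(3:ℝ) / 2)) :=
    (continuous_const.add ((continuous_pow 2).div_const 3)).rpow_const
      (fun x => Or.inl (aux_pos x).ne')
  have hint1 : IntervalIntegrable (fun t : ℝ => Real.exp (-t ^ 2 / 2)) volume 0 z :=
    (Real.continuous_exp.comp (by continuity)).intervalIntegrable 0 z
  have hftc : (∫ t in (0:ℝ)..z, (1 + t ^ 2 / 3) ^ (-(3:ℝ) / 2))
      = z * (1 + z ^ 2 / 3) ^ (-(1:ℝ) / 2) := by
    have := intervalIntegral.integral_eq_sub_of_hasDerivAt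
      (f := fun t : ℝ => t * (1 + t ^ 2 / 3) ^ (-(1:ℝ) / 2))
      (fun t _ => deriv_F t) (hcont.intervalIntegrable 0 z)
    simpa using this
  have hmono : (∫ t in (0:ℝ)..z, Real.exp (-t ^ 2 / 2))
      ≤ ∫ t in (0:ℝ)..z, (1 + t ^ 2 / 3) ^ (-(3:ℝ) / 2) :=
    intervalIntegral.integral_mono_on hz.le hint1 (hcont.intervalIntegrable 0 z)
      (fun t _ => pointwise t)
  rw [le_min_iff]
  constructor
  · calc (1 / z) * ∫ t in (0:ℝ)..z, Real.exp (-t ^ 2 / 2)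
        ≤ (1 / z) * (z * (1 + z ^ 2 / 3) ^ (-(1:ℝ) / 2)) := by
          rw [← hftc]; exact mul_le_mul_of_nonneg_left hmono (by positivity)
      _ = (1 + z ^ 2 / 3) ^ (-(1:ℝ) / 2) := by field_simp
  · have htail : (∫ t in (0:ℝ)..z, Real.exp (-t ^ 2 / 2))
        ≤ ∫ t in Set.Ioi (0:ℝ), Real.exp (-(1/2) * t ^ 2) := by
      rw [intervalIntegral.integral_of_le hz.le]
      have hig : IntegrableOn (fun t : ℝ => Real.exp (-(1/2) * t ^ 2)) (Set.Ioi 0) :=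
        (integrable_exp_neg_mul_sq (by norm_num)).integrableOn
      have := MeasureTheory.setIntegral_mono_set (s := Set.Ioc 0 z) hig
        (Filter.Eventually.of_forall fun t => (Real.exp_pos _).le)
        (HasSubset.Subset.eventuallyLE Set.Ioc_subset_Ioi_self)
      simp_rw [show ∀ t : ℝ, -t ^ 2 / 2 = -(1/2) * t ^ 2 from fun t => by ring]
      exact this
    rw [integral_gaussian_Ioi] at htail
    have h4 : √(π / (1/2)) = 2 * √(π/2) := by
      rw [show π/(1/2) = (2:ℝ)^2 * (π/2) by ring, Real.sqrt_mul (by positivity),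
        Real.sqrt_sq (by norm_num)]
    have h5 : Real.sqrt (π / (2 * z ^ 2)) = √(π/2) / z := by
      rw [show π/(2*z^2) = (π/2)/z^2 by ring, Real.sqrt_div (by positivity),
        Real.sqrt_sq hz.le]
    rw [h4] at htail
    rw [h5]
    have : (∫ t in (0:ℝ)..z, Real.exp (-t ^ 2 / 2)) ≤ √(π/2) := by linarith
    rw [one_div, inv_mul_le_iff₀ hz, mul_div_cancel₀ _ hz.ne']
    exact this
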